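/- The generating function for the counts f(t) of partitions in DS(t) satisfies Σ_{t≥0} f(t−1) x^t = 1/(1 − x − x^3), where f(−1) = f(0) = 1 and f(t) is the number of self-conjugate partitions in DS(t) for t ≥ 1. -/

import Mathlib

/-- An integer partition, given by its (weakly decreasing, eventually zero)
sequence of parts, indexed from `0`. -/
structure IntPartition where
  parts : ℕ → ℕ
  antitone : ∀ i j, i ≤ j → parts j ≤ parts i
  finite : ∃ N, ∀ i, N ≤ i → parts i = 0

namespace IntPartition

/-- The size of a partition: the sum of its parts. -/
noncomputable def size (lam : IntPartition) : ℕ := ∑ᶠ i, lam.parts i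

/-- The parts of the conjugate partition: `conjParts lam j` is the number of
rows `i` with `lam.parts i > j` (rows and columns are `0`-indexed). -/
noncomputable def conjParts (lam : IntPartition) (j : ℕ) : ℕ :=
  Nat.card {i : ℕ | j < lam.parts i}

/-- A partition is self-conjugate if it equals its conjugate. -/
def IsSelfConjugate (lam : IntPartition) : Prop :=
  ∀ j, lam.conjParts j = lam.parts j

/-- `(i, j)` (both `0`-indexed) is a cell of the Young diagram of `lam`. -/
def IsCell (lam : IntPartition) (i j : ℕ) : Prop := j < lam.parts i

/-- The hook length of the cell `(i, j)` (both `0`-indexed): the number of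
cells directly to the right, plus the number directly below, plus one. -/
noncomputable def hook (lam : IntPartition) (i j : ℕ) : ℕ :=
  (lam.parts i - j) + (lam.conjParts j - i) - 1

/-- A partition is a `t`-core if no hook length is divisible by `t`. -/
def IsCore (lam : IntPartition) (t : ℕ) : Prop :=
  ∀ i j, lam.IsCell i j → ¬ (t ∣ lam.hook i j)

/-- The size of the Durfee square: the largest `k` such that the partition has
at least `k` parts of size at least `k`. -/
noncomputable def durfee (lam : IntPartition) : ℕ :=
  Nat.card {i : ℕ | i < lam.parts i}

/-- A partition has distinct parts if its (nonzero) parts are pairwise different. -/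
def DistinctParts (lam : IntPartition) : Prop :=
  ∀ i j, lam.parts i ≠ 0 → lam.parts j ≠ 0 → i ≠ j → lam.parts i ≠ lam.parts j

/-- The set of main diagonal hook lengths of `lam`. -/
noncomputable def MD (lam : IntPartition) : Set ℕ :=
  {h | ∃ i < lam.durfee, lam.hook i i = h}

/-- `lam ∈ DS(t)`: `lam` is a self-conjugate `(t, t+1)`-core partition whose
first `durfee lam` parts are pairwise distinct. -/
def InDS (lam : IntPartition) (t : ℕ) : Prop :=
  lam.IsSelfConjugate ∧ lam.IsCore t ∧ lam.IsCore (t + 1) ∧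
    ∀ i j, i < lam.durfee → j < lam.durfee → i ≠ j → lam.parts i ≠ lam.parts j

end IntPartition

/-- `fDS t` is the number of partitions in `DS(t)`. -/
noncomputable def fDS (t : ℕ) : ℕ := Nat.card {lam : IntPartition // lam.InDS t}

-- helper: lower-closed bounded set of naturals
lemma lowerset_card_iff (S : Set ℕ) (N : ℕ) (hb : ∀ i ∈ S, i < N)
    (hlow : ∀ i j, i ≤ j → j ∈ S → i ∈ S) :
    ∀ i, i ∈ S ↔ i < Nat.card S := by
  have hfin : S.Finite := Set.Finite.subset (Set.finite_Iio N) (fun i hi => hb i hi)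
  have hcard : Nat.card S = hfin.toFinset.card := by
    rw [Nat.card_eq_card_finite_toFinset hfin]
  intro i
  rw [hcard]
  constructor
  · intro hi
    have hsub : Finset.range (i+1) ⊆ hfin.toFinset := by
      intro m hm
      simp only [Finset.mem_range] at hm
      simp only [Set.Finite.mem_toFinset]
      exact hlow m i (Nat.lt_succ_iff.mp hm) hi
    calc i < i + 1 := Nat.lt_succ_self i
      _ = (Finset.range (i+1)).card := by simp
      _ ≤ hfin.toFinset.card := Finset.card_le_card hsub
  · intro hi
    by_contra hmem
    have hsub : hfin.toFinset ⊆ Finset.range i := by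
      intro m hm
      simp only [Set.Finite.mem_toFinset] at hm
      simp only [Finset.mem_range]
      by_contra hmi
      exact hmem (hlow i m (Nat.le_of_not_lt hmi) hm)
    have := Finset.card_le_card hsub
    simp at this
    omega

namespace IntPartition

@[ext] lemma ext' {lam mu : IntPartition} (h : ∀ i, lam.parts i = mu.parts i) : lam = mu := by
  cases lam; cases mu; simp_all [funext_iff]

lemma lt_conjParts_iff (lam : IntPartition) (i j : ℕ) :
    i < lam.conjParts j ↔ j < lam.parts i := by
  obtain ⟨N, hN⟩ := lam.finite
  have := lowerset_card_iff {i : ℕ | j < lam.parts i} N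
    (fun i hi => by
      by_contra h
      have := hN i (Nat.le_of_not_lt h)
      simp [Set.mem_setOf_eq, this] at hi)
    (fun a b hab hb => lt_of_lt_of_le hb (lam.antitone a b hab))
  exact (this i).symm

lemma lt_durfee_iff (lam : IntPartition) (i : ℕ) :
    i < lam.durfee ↔ i < lam.parts i := by
  obtain ⟨N, hN⟩ := lam.finite
  have := lowerset_card_iff {i : ℕ | i < lam.parts i} N
    (fun i hi => by
      by_contra h
      have := hN i (Nat.le_of_not_lt h)
      simp [Set.mem_setOf_eq, this] at hi)
    (fun a b hab hb => by
      simp only [Set.mem_setOf_eq] at *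
      calc a ≤ b := hab
        _ < lam.parts b := hb
        _ ≤ lam.parts a := lam.antitone a b hab)
  exact (this i).symm

variable (lam : IntPartition)

/-- number of (positive) rows -/
noncomputable def nrows : ℕ := lam.conjParts 0

lemma parts_pos_iff (i : ℕ) : 0 < lam.parts i ↔ i < lam.nrows := by
  rw [nrows, lt_conjParts_iff]

lemma conjParts_anti : Antitone lam.conjParts := by
  intro j j' h
  by_contra hc
  push_neg at hc
  have h1 : lam.conjParts j < lam.conjParts j' := hc
  have h2 := (lam.lt_conjParts_iff (lam.conjParts j) j').mp h1
  have h3 : j < lam.parts (lam.conjParts j) := lt_of_le_of_lt h h2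
  exact lt_irrefl _ ((lam.lt_conjParts_iff (lam.conjParts j) j).mpr h3)

/-- beta numbers (first-column hook lengths), sensible for `i < nrows`. -/
noncomputable def beta (i : ℕ) : ℕ := lam.parts i + (lam.nrows - 1 - i)

noncomputable def Bset : Finset ℕ := (Finset.range lam.nrows).image lam.beta

lemma beta_strictAntiOn : ∀ i i', i < i' → i' < lam.nrows → lam.beta i' < lam.beta i := by
  intro i i' h h'
  have h1 := lam.antitone i i' (le_of_lt h)
  have h2 : 0 < lam.parts i' := (lam.parts_pos_iff i').mpr h'
  unfold beta
  omega

lemma hook_eq (i j : ℕ) (hc : lam.IsCell i j) :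
    lam.hook i j + (i + j + 1) = lam.parts i + lam.conjParts j := by
  have h1 : j < lam.parts i := hc
  have h2 : i < lam.conjParts j := (lam.lt_conjParts_iff i j).mpr hc
  unfold hook
  omega

lemma cell_row_lt (i j : ℕ) (hc : lam.IsCell i j) : i < lam.nrows := by
  rw [← lam.parts_pos_iff]
  exact lt_of_le_of_lt (Nat.zero_le j) hc

/-- Disjointness: a hook in row `i` is never `beta i - beta r` for `i < r < nrows`. -/
lemma hook_ne_beta_sub (i j r : ℕ) (hc : lam.IsCell i j) (hir : i < r) (hrN : r < lam.nrows) :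
    lam.hook i j ≠ lam.beta i - lam.beta r := by
  have hiN : i < lam.nrows := lam.cell_row_lt i j hc
  have hb : lam.beta r < lam.beta i := lam.beta_strictAntiOn i r hir hrN
  have hhook := lam.hook_eq i j hc
  have h2 : i < lam.conjParts j := (lam.lt_conjParts_iff i j).mpr hc
  have hbi : lam.beta i = lam.parts i + (lam.nrows - 1 - i) := rfl
  have hbr : lam.beta r = lam.parts r + (lam.nrows - 1 - r) := rfl
  intro heq
  -- from heq : conjParts j + parts r = j + r + 1
  have key : lam.conjParts j + lam.parts r = j + r + 1 := by omega
  by_cases hcell : j < lam.parts r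
  · have : r < lam.conjParts j := (lam.lt_conjParts_iff r j).mpr hcell
    omega
  · push_neg at hcell
    have : ¬ r < lam.conjParts j := fun h => absurd ((lam.lt_conjParts_iff r j).mp h) (not_lt.mpr hcell)
    push_neg at this
    omega

lemma hook_strict (i j j' : ℕ) (h : j < j') (hc' : lam.IsCell i j') :
    lam.hook i j' < lam.hook i j := by
  have hc : lam.IsCell i j := lt_trans h hc'
  have e1 := lam.hook_eq i j hc
  have e2 := lam.hook_eq i j' hc'
  have := lam.conjParts_anti (le_of_lt h)
  omega

lemma hook_pos (i j : ℕ) (hc : lam.IsCell i j) : 1 ≤ lam.hook i j := by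
  have e := lam.hook_eq i j hc
  have h2 : i < lam.conjParts j := (lam.lt_conjParts_iff i j).mpr hc
  have : j < lam.parts i := hc
  omega

lemma hook_le_beta (i j : ℕ) (hc : lam.IsCell i j) : lam.hook i j ≤ lam.beta i := by
  have e := lam.hook_eq i j hc
  have h2 : i < lam.conjParts j := (lam.lt_conjParts_iff i j).mpr hc
  have hiN : i < lam.nrows := lam.cell_row_lt i j hc
  have hcle : lam.conjParts j ≤ lam.nrows := lam.conjParts_anti (Nat.zero_le j)
  have hbi : lam.beta i = lam.parts i + (lam.nrows - 1 - i) := rfl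
  omega

/-- Coverage: every value in `[1, beta i]` is a hook of row `i` or of the form
`beta i - beta r`. -/
lemma row_coverage (i : ℕ) (hiN : i < lam.nrows) (h : ℕ) (h1 : 1 ≤ h) (h2 : h ≤ lam.beta i) :
    (∃ j, lam.IsCell i j ∧ lam.hook i j = h) ∨
    (∃ r, i < r ∧ r < lam.nrows ∧ lam.beta i - lam.beta r = h) := by
  classical
  set F1 : Finset ℕ := (Finset.range (lam.parts i)).image (fun j => lam.hook i j) with hF1
  set F2 : Finset ℕ := (Finset.Ico (i+1) lam.nrows).image (fun r => lam.beta i - lam.beta r) with hF2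
  have hpi : 0 < lam.parts i := (lam.parts_pos_iff i).mpr hiN
  have hcard1 : F1.card = lam.parts i := by
    rw [hF1, Finset.card_image_of_injOn, Finset.card_range]
    intro a ha b hb hab
    simp only [Finset.mem_coe, Finset.mem_range] at ha hb
    by_contra hne
    rcases Nat.lt_or_ge a b with hlt | hge
    · exact absurd hab (ne_of_gt (lam.hook_strict i a b hlt hb))
    · have : b < a := lt_of_le_of_ne hge (Ne.symm hne)
      exact absurd hab.symm (ne_of_gt (lam.hook_strict i b a this ha))
  have hcard2 : F2.card = lam.nrows - (i+1) := by
    rw [hF2, Finset.card_image_of_injOn, Nat.card_Ico]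
    intro a ha b hb hab
    simp only [Finset.mem_coe, Finset.mem_Ico] at ha hb
    by_contra hne
    have hba : lam.beta i - lam.beta a = lam.beta i - lam.beta b := hab
    rcases Nat.lt_or_ge a b with hlt | hge
    · have h3 := lam.beta_strictAntiOn a b hlt hb.2
      have h4 := lam.beta_strictAntiOn i a (by omega) ha.2
      omega
    · have : b < a := lt_of_le_of_ne hge (Ne.symm hne)
      have h3 := lam.beta_strictAntiOn b a this ha.2
      have h4 := lam.beta_strictAntiOn i b (by omega) hb.2
      omega
  have hsub : F1 ∪ F2 ⊆ Finset.Icc 1 (lam.beta i) := by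
    intro x hx
    rcases Finset.mem_union.mp hx with hx | hx
    · simp only [hF1, Finset.mem_image, Finset.mem_range] at hx
      obtain ⟨j, hj, rfl⟩ := hx
      exact Finset.mem_Icc.mpr ⟨lam.hook_pos i j hj, lam.hook_le_beta i j hj⟩
    · simp only [hF2, Finset.mem_image, Finset.mem_Ico] at hx
      obtain ⟨r, ⟨hr1, hr2⟩, rfl⟩ := hx
      have := lam.beta_strictAntiOn i r (by omega) hr2
      exact Finset.mem_Icc.mpr ⟨by omega, by omega⟩
  have hdisj : Disjoint F1 F2 := by
    rw [Finset.disjoint_left]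
    intro x hx1 hx2
    simp only [hF1, Finset.mem_image, Finset.mem_range] at hx1
    simp only [hF2, Finset.mem_image, Finset.mem_Ico] at hx2
    obtain ⟨j, hj, rfl⟩ := hx1
    obtain ⟨r, ⟨hr1, hr2⟩, heq⟩ := hx2
    exact lam.hook_ne_beta_sub i j r hj (by omega) hr2 heq.symm
  have hbi : lam.beta i = lam.parts i + (lam.nrows - 1 - i) := rfl
  have hcardU : (F1 ∪ F2).card = lam.beta i := by
    rw [Finset.card_union_of_disjoint hdisj, hcard1, hcard2]
    omega
  have heq : F1 ∪ F2 = Finset.Icc 1 (lam.beta i) := by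
    apply Finset.eq_of_subset_of_card_le hsub
    rw [hcardU, Nat.card_Icc]
    omega
  have hmem : h ∈ F1 ∪ F2 := by
    rw [heq]; exact Finset.mem_Icc.mpr ⟨h1, h2⟩
  rcases Finset.mem_union.mp hmem with hx | hx
  · left
    simp only [hF1, Finset.mem_image, Finset.mem_range] at hx
    obtain ⟨j, hj, hh⟩ := hx
    exact ⟨j, hj, hh⟩
  · right
    simp only [hF2, Finset.mem_image, Finset.mem_Ico] at hx
    obtain ⟨r, ⟨hr1, hr2⟩, hh⟩ := hx
    exact ⟨r, by omega, hr2, hh⟩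

/-- Core criterion via beta numbers. -/
lemma isCore_iff (t : ℕ) (ht : 1 ≤ t) :
    lam.IsCore t ↔ ∀ b ∈ lam.Bset, t ≤ b → b - t ∈ lam.Bset := by
  constructor
  · intro hcore b hb htb
    simp only [Bset, Finset.mem_image, Finset.mem_range] at hb
    obtain ⟨i, hi, rfl⟩ := hb
    have := lam.row_coverage i hi t ht htb
    rcases this with ⟨j, hj, hh⟩ | ⟨r, hr1, hr2, hh⟩
    · exact absurd ⟨1, by omega⟩ (hcore i j hj)
    · have : lam.beta i - t = lam.beta r := by
        have := lam.beta_strictAntiOn i r hr1 hr2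
        omega
      rw [this]
      simp only [Bset, Finset.mem_image, Finset.mem_range]
      exact ⟨r, hr2, rfl⟩
  · intro hcl i j hc hdvd
    obtain ⟨c, hcm0⟩ := hdvd
    have hcm : lam.hook i j = c * t := by rw [hcm0, mul_comm]
    have hpos := lam.hook_pos i j hc
    have hle := lam.hook_le_beta i j hc
    have hiN := lam.cell_row_lt i j hc
    have hbmem : lam.beta i ∈ lam.Bset := by
      simp only [Bset, Finset.mem_image, Finset.mem_range]; exact ⟨i, hiN, rfl⟩
    have key : ∀ m : ℕ, m * t ≤ lam.beta i → lam.beta i - m * t ∈ lam.Bset := by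
      intro m
      induction m with
      | zero => intro _; simpa using hbmem
      | succ n ih =>
        intro hle'
        have hsm : (n+1) * t = n * t + t := Nat.succ_mul n t
        have h1 : n * t ≤ lam.beta i := by omega
        have h2 := ih h1
        have h3 : t ≤ lam.beta i - n * t := by omega
        have := hcl _ h2 h3
        have heq : lam.beta i - n * t - t = lam.beta i - (n+1) * t := by omega
        rwa [heq] at this
    have hc0 : c ≠ 0 := by rintro rfl; simp at hcm; omega
    have hmem := key c (by omega)
    simp only [Bset, Finset.mem_image, Finset.mem_range] at hmem
    obtain ⟨r, hrN, hr⟩ := hmem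
    have hlt : lam.beta r < lam.beta i := by omega
    have hri : i < r := by
      by_contra hh
      push_neg at hh
      rcases eq_or_lt_of_le hh with rfl | hh'
      · omega
      · have := lam.beta_strictAntiOn r i hh' hiN; omega
    exact lam.hook_ne_beta_sub i j r hc hri hrN (by omega)

end IntPartition

lemma filtercount (k : ℕ) (P : ℕ → Prop) [DecidablePred P]
    (hP : ∀ i j, i ≤ j → j < k → P j → P i) :
    ∀ j, j < ((Finset.range k).filter P).card ↔ (j < k ∧ P j) := by
  intro j
  set F := (Finset.range k).filter P with hF
  constructor
  · intro hj
    by_contra hc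
    have hsub : F ⊆ Finset.range j := by
      intro m hm
      simp only [hF, Finset.mem_filter, Finset.mem_range] at hm
      simp only [Finset.mem_range]
      by_contra hmj
      exact hc ⟨lt_of_le_of_lt (Nat.le_of_not_lt hmj) hm.1 |>.trans_le (le_refl _),
        hP j m (Nat.le_of_not_lt hmj) hm.1 hm.2⟩
    have := Finset.card_le_card hsub
    simp only [Finset.card_range] at this
    omega
  · rintro ⟨hjk, hPj⟩
    have hsub : Finset.range (j+1) ⊆ F := by
      intro m hm
      simp only [Finset.mem_range] at hm
      simp only [hF, Finset.mem_filter, Finset.mem_range]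
      have hmj : m ≤ j := by omega
      exact ⟨by omega, hP m j hmj hjk hPj⟩
    have := Finset.card_le_card hsub
    simp only [Finset.card_range] at this
    omega

-- descending enumeration of a finset
noncomputable def desc (A : Finset ℕ) (i : ℕ) : ℕ :=
  if h : i < A.card then (A.orderIsoOfFin rfl ⟨A.card - 1 - i, by omega⟩ : ℕ) else 0

lemma desc_mem (A : Finset ℕ) {i : ℕ} (h : i < A.card) : desc A i ∈ A := by
  rw [desc, dif_pos h]
  exact (A.orderIsoOfFin rfl _).2
lemma desc_strictAnti (A : Finset ℕ) {i j : ℕ} (hij : i < j) (h : j < A.card) :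
    desc A j < desc A i := by
  rw [desc, desc, dif_pos h, dif_pos (lt_trans hij h)]
  have : (⟨A.card - 1 - j, by omega⟩ : Fin A.card) < ⟨A.card - 1 - i, by omega⟩ := by
    simp [Fin.lt_def]; omega
  exact_mod_cast (A.orderIsoOfFin rfl).strictMono this
lemma desc_surj (A : Finset ℕ) {a : ℕ} (ha : a ∈ A) : ∃ i < A.card, desc A i = a := by
  obtain ⟨⟨m, hm⟩, hma⟩ := (A.orderIsoOfFin rfl).surjective ⟨a, ha⟩
  refine ⟨A.card - 1 - m, by omega, ?_⟩
  rw [desc, dif_pos (by omega)]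
  have : A.card - 1 - (A.card - 1 - m) = m := by omega
  simp only [this]
  exact congrArg Subtype.val hma

def Valid (t : ℕ) (A : Finset ℕ) : Prop :=
  A ⊆ Finset.Icc 1 t ∧
  (∀ a ∈ A, ∀ b ∈ A, a + b ≠ t + 1 ∧ a + b ≠ t + 2) ∧
  (∀ a ∈ A, ∀ b ∈ A, a < b → a + 2 ≤ b)

instance : ∀ t A, Decidable (Valid t A) := fun t A => by unfold Valid; infer_instance

section construct
variable {t : ℕ} {A : Finset ℕ} (hV : Valid t A)
include hV

lemma valid_desc_bounds {i : ℕ} (h : i < A.card) : 1 ≤ desc A i ∧ desc A i ≤ t := by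
  have := hV.1 (desc_mem A h)
  simpa using this

lemma valid_desc_gap : ∀ (d i : ℕ), i + d < A.card → desc A (i + d) + 2 * d ≤ desc A i := by
  intro d
  induction d with
  | zero => intro i _; simp
  | succ n ih =>
    intro i h
    have h1 := ih (i+1) (by omega)
    have h2 : desc A (i + 1) < desc A i := desc_strictAnti A (by omega) (by omega)
    have h3 := hV.2.2 _ (desc_mem A (by omega : i + 1 < A.card)) _ (desc_mem A (by omega : i < A.card)) h2
    have : i + 1 + n = i + (n+1) := by omega
    rw [this] at h1
    omega

-- `desc A i + i` is at least `A.card` for `i < A.card`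
lemma valid_desc_large {i : ℕ} (h : i < A.card) : A.card ≤ desc A i + i := by
  have h1 := valid_desc_gap hV (A.card - 1 - i) i (by omega)
  have h2 := (valid_desc_bounds hV (show A.card - 1 < A.card by omega)).1
  have : i + (A.card - 1 - i) = A.card - 1 := by omega
  rw [this] at h1
  omega

lemma valid_card_le : A.card ≤ t := by
  rcases Nat.eq_zero_or_pos A.card with h | h
  · omega
  · have h1 := valid_desc_large hV (show 0 < A.card from h)
    have h2 := (valid_desc_bounds hV h).2
    omega

/-- row lengths of the constructed partition -/
noncomputable def pA (A : Finset ℕ) (i : ℕ) : ℕ :=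
  if i < A.card then i + desc A i
  else ((Finset.range A.card).filter (fun r => i < r + desc A r)).card

lemma rowsum_strictAnti {r r' : ℕ} (h : r < r') (h' : r' < A.card) :
    r' + desc A r' < r + desc A r := by
  have := valid_desc_gap hV (r' - r) r (by omega)
  have heq : r + (r' - r) = r' := by omega
  rw [heq] at this
  omega

lemma cnt_mem_iff (i : ℕ) :
    ∀ j, j < ((Finset.range A.card).filter (fun r => i < r + desc A r)).card ↔
      (j < A.card ∧ i < j + desc A j) := by
  apply filtercount
  intro r r' hrr' hr' hP
  rcases eq_or_lt_of_le hrr' with rfl | hlt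
  · exact hP
  · have := rowsum_strictAnti hV hlt hr'
    omega

omit hV in
lemma cnt_le_card (i : ℕ) :
    ((Finset.range A.card).filter (fun r => i < r + desc A r)).card ≤ A.card := by
  exact le_trans (Finset.card_filter_le _ _) (by simp)

omit hV in
lemma pA_small {i : ℕ} (h : i < A.card) : pA A i = i + desc A i := if_pos h
omit hV in
lemma pA_big {i : ℕ} (h : ¬ i < A.card) :
    pA A i = ((Finset.range A.card).filter (fun r => i < r + desc A r)).card := if_neg h

lemma pA_big_le {i : ℕ} (h : ¬ i < A.card) : pA A i ≤ A.card := by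
  rw [pA_big h]; exact cnt_le_card i

lemma pA_small_ge {i : ℕ} (h : i < A.card) : A.card ≤ pA A i := by
  rw [pA_small h]
  have := valid_desc_large hV h
  omega

lemma pA_antitone : ∀ i j, i ≤ j → pA A j ≤ pA A i := by
  intro i j hij
  rcases eq_or_lt_of_le hij with rfl | hlt
  · exact le_refl _
  by_cases hj : j < A.card
  · have hi : i < A.card := lt_trans hlt hj
    rw [pA_small hi, pA_small hj]
    have := rowsum_strictAnti hV hlt hj
    omega
  · by_cases hi : i < A.card
    · exact le_trans (pA_big_le hV hj) (pA_small_ge hV hi)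
    · rw [pA_big hi, pA_big hj]
      apply Finset.card_le_card
      intro r hr
      simp only [Finset.mem_filter, Finset.mem_range] at *
      omega

lemma pA_zero_large {i : ℕ} (h : 2 * t ≤ i) : pA A i = 0 := by
  have hk := valid_card_le hV
  have hik : ¬ i < A.card := by omega
  rw [pA_big hik]
  rw [Finset.card_eq_zero, Finset.filter_eq_empty_iff]
  intro r hr
  simp only [Finset.mem_range] at hr
  have := (valid_desc_bounds hV hr).2
  omega

/-- cell symmetry (one-sided version) -/
lemma pA_symm_le {i j : ℕ} (hij : i ≤ j) : (j < pA A i ↔ i < pA A j) := by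
  by_cases hj : j < A.card
  · have hi : i < A.card := lt_of_le_of_lt hij hj
    rw [pA_small hi, pA_small hj]
    have h1 := pA_small_ge hV hi
    have h2 := pA_small_ge hV hj
    rw [pA_small hi] at h1
    rw [pA_small hj] at h2
    constructor
    · intro _; omega
    · intro _; omega
  · by_cases hi : i < A.card
    · rw [pA_small hi, pA_big hj]
      rw [cnt_mem_iff hV j i]
      constructor
      · intro h; exact ⟨hi, h⟩
      · intro h; exact h.2
    · rw [pA_big hi, pA_big hj]
      have h1 := cnt_le_card (A := A) i
      have h2 := cnt_le_card (A := A) j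
      constructor
      · intro h; omega
      · intro h; omega

lemma pA_symm (i j : ℕ) : (j < pA A i ↔ i < pA A j) := by
  rcases le_total i j with h | h
  · exact pA_symm_le hV h
  · exact (pA_symm_le hV h).symm

end construct


lemma nat_eq_of_lt_iff {n m : ℕ} (h : ∀ i, i < n ↔ i < m) : n = m := by
  have h1 := h n; have h2 := h m; omega

section construct2
variable {t : ℕ} {A : Finset ℕ} (hV : Valid t A)
include hV

noncomputable def lamA : IntPartition :=
  ⟨pA A, pA_antitone hV, ⟨2*t, fun i hi => pA_zero_large hV hi⟩⟩

lemma lamA_parts (i : ℕ) : (lamA hV).parts i = pA A i := rfl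

lemma lamA_selfConj : (lamA hV).IsSelfConjugate := by
  intro j
  apply nat_eq_of_lt_iff
  intro i
  rw [IntPartition.lt_conjParts_iff, lamA_parts, lamA_parts]
  exact pA_symm hV i j

lemma lamA_durfee : (lamA hV).durfee = A.card := by
  apply nat_eq_of_lt_iff
  intro i
  rw [IntPartition.lt_durfee_iff, lamA_parts]
  constructor
  · intro h
    by_contra hc
    have := pA_big_le (hV := hV) hc
    omega
  · intro h
    rw [pA_small h]
    have := (valid_desc_bounds hV h).1
    omega

lemma lamA_nrows : (lamA hV).nrows = pA A 0 := by
  rw [IntPartition.nrows, lamA_selfConj hV 0, lamA_parts]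

lemma lamA_nrows_pos (hk : 0 < A.card) : (lamA hV).nrows = desc A 0 := by
  rw [lamA_nrows hV, pA_small hk]; omega

lemma desc0_ge_card (hk : 0 < A.card) : A.card ≤ desc A 0 := by
  have := valid_desc_large hV hk
  omega

lemma lamA_beta_small (hk : 0 < A.card) {i : ℕ} (hi : i < A.card) :
    (lamA hV).beta i + 1 = desc A 0 + desc A i := by
  rw [IntPartition.beta, lamA_nrows_pos hV hk, lamA_parts, pA_small hi]
  have h0 := desc0_ge_card hV hk
  omega

/-- the complement Finset for the lower beta values -/
noncomputable def Cset : Finset ℕ :=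
  (Finset.range (desc A 0)).filter (fun v => ∀ a ∈ A, v + a ≠ desc A 0)

lemma Cset_card (hk : 0 < A.card) : (Cset (A := A)).card = desc A 0 - A.card := by
  have h0 := desc0_ge_card hV hk
  have : (Cset (A := A)) = Finset.range (desc A 0) \ (A.image (fun a => desc A 0 - a)) := by
    ext v
    simp only [Cset, Finset.mem_filter, Finset.mem_sdiff, Finset.mem_range, Finset.mem_image]
    constructor
    · rintro ⟨hv, hs⟩
      refine ⟨hv, ?_⟩
      rintro ⟨a, ha, rfl⟩
      have h1 := hV.1 ha
      simp only [Finset.mem_Icc] at h1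
      have hale : a ≤ desc A 0 := by
        rcases desc_surj A ha with ⟨i, hi, rfl⟩
        rcases Nat.eq_zero_or_pos i with rfl | hipos
        · omega
        · have := desc_strictAnti A hipos hi; omega
      exact hs a ha (by omega)
    · rintro ⟨hv, hs⟩
      refine ⟨hv, fun a ha hva => ?_⟩
      exact hs ⟨a, ha, by omega⟩
  rw [this, Finset.card_sdiff_of_subset]
  · rw [Finset.card_range, Finset.card_image_of_injOn]
    intro a ha b hb hab
    simp only [Finset.mem_coe] at ha hb
    simp only at hab
    have hale : a ≤ desc A 0 := by
      rcases desc_surj A ha with ⟨i, hi, rfl⟩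
      rcases Nat.eq_zero_or_pos i with rfl | hipos
      · omega
      · have := desc_strictAnti A hipos hi; omega
    have hble : b ≤ desc A 0 := by
      rcases desc_surj A hb with ⟨i, hi, rfl⟩
      rcases Nat.eq_zero_or_pos i with rfl | hipos
      · omega
      · have := desc_strictAnti A hipos hi; omega
    omega
  · intro v hv
    simp only [Finset.mem_image] at hv
    obtain ⟨a, ha, rfl⟩ := hv
    have h1 := hV.1 ha
    simp only [Finset.mem_Icc] at h1
    have hale : a ≤ desc A 0 := by
      rcases desc_surj A ha with ⟨i, hi, rfl⟩
      rcases Nat.eq_zero_or_pos i with rfl | hipos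
      · omega
      · have := desc_strictAnti A hipos hi; omega
    simp only [Finset.mem_range]
    omega

lemma lamA_beta_big_mem (hk : 0 < A.card) {i : ℕ} (hik : A.card ≤ i)
    (hia : i < desc A 0) : (lamA hV).beta i ∈ Cset (A := A) := by
  have h0 := desc0_ge_card hV hk
  have hbi : (lamA hV).beta i + 1 + i =
      ((Finset.range A.card).filter (fun r => i < r + desc A r)).card + desc A 0 := by
    rw [IntPartition.beta, lamA_nrows_pos hV hk, lamA_parts, pA_big (by omega)]
    omega
  have hcnt := cnt_le_card (A := A) i
  simp only [Cset, Finset.mem_filter, Finset.mem_range]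
  constructor
  · omega
  · intro a ha hva
    rcases desc_surj A ha with ⟨r, hr, rfl⟩
    -- key : cnt + (r + desc A r) = i + r + 1
    rw [← hva] at hbi
    have key : ((Finset.range A.card).filter (fun r => i < r + desc A r)).card
        + desc A r = i + 1 := by omega
    by_cases hcell : i < r + desc A r
    · have := (cnt_mem_iff hV i r).mpr ⟨hr, hcell⟩
      omega
    · have h5 : ((Finset.range A.card).filter (fun r => i < r + desc A r)).card ≤ r := by
        by_contra hgt
        push_neg at hgt
        exact hcell ((cnt_mem_iff hV i r).mp hgt).2
      omega

lemma lamA_Bset_lower (hk : 0 < A.card) :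
    (Finset.Ico A.card (desc A 0)).image ((lamA hV).beta) = Cset (A := A) := by
  have h0 := desc0_ge_card hV hk
  apply Finset.eq_of_subset_of_card_le
  · intro v hv
    simp only [Finset.mem_image, Finset.mem_Ico] at hv
    obtain ⟨i, ⟨hi1, hi2⟩, rfl⟩ := hv
    exact lamA_beta_big_mem hV hk hi1 hi2
  · rw [Cset_card hV hk]
    rw [Finset.card_image_of_injOn]
    · rw [Nat.card_Ico]
    · intro a ha b hb hab
      simp only [Finset.mem_coe, Finset.mem_Ico] at ha hb
      by_contra hne
      have hN := lamA_nrows_pos hV hk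
      rcases Nat.lt_or_ge a b with hlt | hge
      · have := (lamA hV).beta_strictAntiOn a b hlt (by omega)
        omega
      · have hba : b < a := by omega
        have := (lamA hV).beta_strictAntiOn b a hba (by omega)
        omega

lemma lamA_Bset_mem (hk : 0 < A.card) (v : ℕ) :
    v ∈ (lamA hV).Bset ↔
      ((∃ a ∈ A, v + 1 = desc A 0 + a) ∨ (v ∈ Cset (A := A))) := by
  have h0 := desc0_ge_card hV hk
  have hN := lamA_nrows_pos hV hk
  rw [IntPartition.Bset]
  constructor
  · intro hv
    simp only [Finset.mem_image, Finset.mem_range] at hv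
    obtain ⟨i, hi, rfl⟩ := hv
    rw [hN] at hi
    by_cases hik : i < A.card
    · left
      refine ⟨desc A i, desc_mem A hik, ?_⟩
      have := lamA_beta_small hV hk hik
      omega
    · right
      exact lamA_beta_big_mem hV hk (by omega) hi
  · intro hv
    rcases hv with ⟨a, ha, hva⟩ | hv
    · rcases desc_surj A ha with ⟨i, hik, rfl⟩
      simp only [Finset.mem_image, Finset.mem_range]
      refine ⟨i, by omega, ?_⟩
      have := lamA_beta_small hV hk hik
      omega
    · rw [← lamA_Bset_lower hV hk] at hv
      simp only [Finset.mem_image, Finset.mem_Ico] at hv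
      obtain ⟨i, ⟨hi1, hi2⟩, rfl⟩ := hv
      simp only [Finset.mem_image, Finset.mem_range]
      exact ⟨i, by omega, rfl⟩


lemma lamA_nrows_eq_zero (hk : A.card = 0) : (lamA hV).nrows = 0 := by
  rw [lamA_nrows hV, pA_big (by omega)]
  simp [hk]

lemma lamA_isCore_gen (s : ℕ) (hs1 : 1 ≤ s) (hst : t ≤ s)
    (hsum : ∀ a ∈ A, ∀ b ∈ A, a + b ≠ s + 1) : (lamA hV).IsCore s := by
  rw [IntPartition.isCore_iff _ s hs1]
  intro b hb htb
  rcases Nat.eq_zero_or_pos A.card with hk | hk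
  · exfalso
    rw [IntPartition.Bset, lamA_nrows_eq_zero hV hk] at hb
    simp at hb
  · have h0 := desc0_ge_card hV hk
    have ha0t := (valid_desc_bounds hV hk).2
    rw [lamA_Bset_mem hV hk] at hb ⊢
    rcases hb with ⟨a, ha, hba⟩ | hb
    · right
      have hat := hV.1 ha
      simp only [Finset.mem_Icc] at hat
      simp only [Cset, Finset.mem_filter, Finset.mem_range]
      refine ⟨by omega, fun a' ha' heq => ?_⟩
      exact hsum a ha a' ha' (by omega)
    · exfalso
      simp only [Cset, Finset.mem_filter, Finset.mem_range] at hb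
      omega

lemma lamA_InDS (ht : 1 ≤ t) : (lamA hV).InDS t := by
  refine ⟨lamA_selfConj hV, ?_, ?_, ?_⟩
  · exact lamA_isCore_gen hV t ht (le_refl t) (fun a ha b hb => (hV.2.1 a ha b hb).1)
  · exact lamA_isCore_gen hV (t+1) (by omega) (by omega) (fun a ha b hb => (hV.2.1 a ha b hb).2)
  · intro i j hi hj hij
    rw [lamA_durfee hV] at hi hj
    rw [lamA_parts, lamA_parts, pA_small hi, pA_small hj]
    rcases Nat.lt_or_ge i j with h | h
    · have := rowsum_strictAnti hV h hj
      omega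
    · have hji : j < i := by omega
      have := rowsum_strictAnti hV hji hi
      omega

lemma lamA_recover :
    (Finset.range A.card).image (fun i => (lamA hV).parts i - i) = A := by
  ext a
  simp only [Finset.mem_image, Finset.mem_range, lamA_parts]
  constructor
  · rintro ⟨i, hi, rfl⟩
    rw [pA_small hi]
    simpa using desc_mem A hi
  · intro ha
    rcases desc_surj A ha with ⟨i, hi, rfl⟩
    refine ⟨i, hi, ?_⟩
    rw [pA_small hi]
    omega

end construct2


section forward
variable {t : ℕ} {lam : IntPartition} (hl : lam.InDS t)

/-- the set of `parts i - i` over the Durfee square -/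
noncomputable def Aof (lam : IntPartition) : Finset ℕ :=
  (Finset.range lam.durfee).image (fun i => lam.parts i - i)

include hl

lemma fw_strict {i j : ℕ} (hij : i < j) (hj : j < lam.durfee) :
    lam.parts j < lam.parts i := by
  have h1 := lam.antitone i j (le_of_lt hij)
  have h2 := hl.2.2.2 i j (by omega) hj (by omega)
  omega

lemma fw_gap : ∀ d i, i + d < lam.durfee →
    (lam.parts (i+d) - (i+d)) + 2*d ≤ lam.parts i - i := by
  intro d
  induction d with
  | zero => intro i _; simp
  | succ n ih =>
    intro i h
    have h1 := ih (i+1) (by omega)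
    have h2 : lam.parts (i+1) < lam.parts i := fw_strict hl (by omega) (by omega)
    have h3 : i + 1 + n = i + (n+1) := by omega
    rw [h3] at h1
    have h4 : i + (n+1) < lam.parts (i + (n+1)) := (lam.lt_durfee_iff _).mp h
    have h5 : i + 1 < lam.parts (i+1) := by
      rcases Nat.eq_zero_or_pos (n+1) with h' | h'
      · omega
      · have := (lam.lt_durfee_iff (i+1)).mp (by omega)
        omega
    omega

lemma fw_square_cell {i j : ℕ} (hi : i < lam.durfee) (hj : j < lam.durfee) :
    lam.IsCell i j := by
  have h1 : lam.durfee - 1 < lam.parts (lam.durfee - 1) :=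
    (lam.lt_durfee_iff _).mp (by omega)
  have h2 := lam.antitone i (lam.durfee - 1) (by omega)
  have : lam.durfee ≤ lam.parts i := by omega
  exact lt_of_lt_of_le hj this

lemma fw_square_hook {i j : ℕ} (hi : i < lam.durfee) (hj : j < lam.durfee) :
    lam.hook i j + i + j + 1 = lam.parts i + lam.parts j := by
  have := lam.hook_eq i j (fw_square_cell hl hi hj)
  rw [hl.1 j] at this
  omega

lemma fw_sums {i j : ℕ} (hi : i < lam.durfee) (hj : j < lam.durfee) :
    (lam.parts i - i) + (lam.parts j - j) ≠ t + 1 ∧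
    (lam.parts i - i) + (lam.parts j - j) ≠ t + 2 := by
  have hh := fw_square_hook hl hi hj
  have hpi := (lam.lt_durfee_iff i).mp hi
  have hpj := (lam.lt_durfee_iff j).mp hj
  have hcell := fw_square_cell hl hi hj
  constructor
  · intro he
    have : lam.hook i j = t := by omega
    exact hl.2.1 i j hcell (this ▸ dvd_refl t)
  · intro he
    have : lam.hook i j = t + 1 := by omega
    exact hl.2.2.1 i j hcell (this ▸ dvd_refl (t+1))

/-- Key bound: the first part is at most `t`. -/
lemma fw_bound (ht : 1 ≤ t) (h0 : 0 < lam.durfee) : lam.parts 0 ≤ t := by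
  by_contra hgt
  push_neg at hgt
  have hp0 : 0 < lam.parts 0 := (lam.lt_durfee_iff 0).mp h0
  have hN : lam.nrows = lam.parts 0 := hl.1 0
  have h0N : 0 < lam.nrows := by omega
  have hb0 : lam.beta 0 + 1 = 2 * lam.parts 0 := by
    rw [IntPartition.beta, hN]; omega
  -- t is not a hook in row 0
  have hno_t : ¬ ∃ j, lam.IsCell 0 j ∧ lam.hook 0 j = t := by
    rintro ⟨j, hc, hh⟩
    exact hl.2.1 0 j hc (hh ▸ dvd_refl t)
  have hno_t1 : ¬ ∃ j, lam.IsCell 0 j ∧ lam.hook 0 j = t + 1 := by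
    rintro ⟨j, hc, hh⟩
    exact hl.2.2.1 0 j hc (hh ▸ dvd_refl (t+1))
  obtain ⟨r1, hr1pos, hr1N, hr1⟩ := (lam.row_coverage 0 h0N t ht (by omega)).resolve_left hno_t
  obtain ⟨r2, hr2pos, hr2N, hr2⟩ :=
    (lam.row_coverage 0 h0N (t+1) (by omega) (by omega)).resolve_left hno_t1
  have hb1 : lam.beta r1 < lam.beta 0 := lam.beta_strictAntiOn 0 r1 hr1pos hr1N
  have hb2 : lam.beta r2 < lam.beta 0 := lam.beta_strictAntiOn 0 r2 hr2pos hr2N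
  have hv1 : lam.beta r1 + t = lam.beta 0 := by omega
  have hv2 : lam.beta r2 + (t+1) = lam.beta 0 := by omega
  have hr12 : r1 < r2 := by
    rcases Nat.lt_trichotomy r1 r2 with h | h | h
    · exact h
    · exfalso; subst h; omega
    · have := lam.beta_strictAntiOn r2 r1 h hr1N
      omega
  have hr2eq : r2 = r1 + 1 := by
    by_contra hne
    have h1 : r1 + 1 < r2 := by omega
    have hs1 := lam.beta_strictAntiOn r1 (r1+1) (by omega) (by omega)
    have hs2 := lam.beta_strictAntiOn (r1+1) r2 h1 hr2N
    omega
  subst hr2eq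
  -- parts r1 = parts (r1+1)
  have hbr1 : lam.beta r1 = lam.parts r1 + (lam.nrows - 1 - r1) := rfl
  have hbr2 : lam.beta (r1+1) = lam.parts (r1+1) + (lam.nrows - 1 - (r1+1)) := rfl
  have hpeq : lam.parts r1 = lam.parts (r1+1) := by omega
  have hpr1 : lam.parts r1 + t = lam.parts 0 + r1 := by
    rw [hN] at hbr1
    omega
  -- so parts r1 - r1 = parts 0 - t ≥ 1
  rcases Nat.lt_or_ge (r1 + 1) (lam.parts r1) with hcase | hcase
  · -- both r1, r1+1 < durfee, equal parts: contradiction with distinctness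
    have hd1 : r1 < lam.durfee := (lam.lt_durfee_iff r1).mpr (by omega)
    have hd2 : r1 + 1 < lam.durfee := (lam.lt_durfee_iff (r1+1)).mpr (by omega)
    exact hl.2.2.2 r1 (r1+1) hd1 hd2 (by omega) hpeq
  · -- parts r1 = r1 + 1; contradiction with self-conjugacy
    have hpr1v : lam.parts r1 = r1 + 1 := by omega
    have : r1 + 1 < lam.conjParts r1 := by
      rw [lam.lt_conjParts_iff]
      omega
    rw [hl.1 r1] at this
    omega

lemma fw_valid (ht : 1 ≤ t) : Valid t (Aof lam) := by
  refine ⟨?_, ?_, ?_⟩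
  · intro a ha
    simp only [Aof, Finset.mem_image, Finset.mem_range] at ha
    obtain ⟨i, hi, rfl⟩ := ha
    have hpi := (lam.lt_durfee_iff i).mp hi
    have hb := fw_bound hl ht (by omega)
    simp only [Finset.mem_Icc]
    rcases Nat.eq_zero_or_pos i with rfl | hipos
    · omega
    · have := fw_gap hl i 0 (by omega)
      simp only [Nat.zero_add] at this
      omega
  · intro a ha b hb
    simp only [Aof, Finset.mem_image, Finset.mem_range] at ha hb
    obtain ⟨i, hi, rfl⟩ := ha
    obtain ⟨j, hj, rfl⟩ := hb
    exact fw_sums hl hi hj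
  · intro a ha b hb hab
    simp only [Aof, Finset.mem_image, Finset.mem_range] at ha hb
    obtain ⟨i, hi, rfl⟩ := ha
    obtain ⟨j, hj, rfl⟩ := hb
    rcases Nat.lt_trichotomy i j with h | h | h
    · have := fw_gap hl (j - i) i (by omega)
      have hij : i + (j - i) = j := by omega
      rw [hij] at this
      omega
    · exfalso; subst h; omega
    · have := fw_gap hl (i - j) j (by omega)
      have hij : j + (i - j) = i := by omega
      rw [hij] at this
      omega

lemma fw_card : (Aof lam).card = lam.durfee := by
  rw [Aof, Finset.card_image_of_injOn, Finset.card_range]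
  intro i hi j hj hij
  simp only [Finset.mem_coe, Finset.mem_range] at hi hj
  simp only at hij
  by_contra hne
  have hpi := (lam.lt_durfee_iff i).mp hi
  have hpj := (lam.lt_durfee_iff j).mp hj
  rcases Nat.lt_trichotomy i j with h | h | h
  · have := fw_strict hl h hj; omega
  · omega
  · have := fw_strict hl h hi; omega

lemma fw_desc {i : ℕ} (hi : i < lam.durfee) :
    desc (Aof lam) i = lam.parts i - i := by
  have hcard := fw_card hl
  -- descending enumeration is unique
  have key : ∀ m : Fin (Aof lam).card,
      ((Aof lam).orderIsoOfFin rfl m : ℕ) = lam.parts (lam.durfee - 1 - m) - (lam.durfee - 1 - m) := by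
    have hmono : StrictMono (fun m : Fin (Aof lam).card =>
        lam.parts (lam.durfee - 1 - (m : ℕ)) - (lam.durfee - 1 - (m : ℕ))) := by
      intro m m' hmm
      simp only
      have hm' : (m' : ℕ) < lam.durfee := by omega
      have h1 : lam.durfee - 1 - (m' : ℕ) < lam.durfee - 1 - (m : ℕ) := by omega
      have := fw_gap hl ((lam.durfee - 1 - (m:ℕ)) - (lam.durfee - 1 - (m':ℕ))) (lam.durfee - 1 - (m' : ℕ))
        (by omega)
      have heq : lam.durfee - 1 - (m':ℕ) + ((lam.durfee - 1 - (m:ℕ)) - (lam.durfee - 1 - (m':ℕ)))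
          = lam.durfee - 1 - (m:ℕ) := by omega
      rw [heq] at this
      omega
    have hmem : ∀ m : Fin (Aof lam).card, (fun m : Fin (Aof lam).card =>
        lam.parts (lam.durfee - 1 - (m : ℕ)) - (lam.durfee - 1 - (m : ℕ))) m ∈ Aof lam := by
      intro m
      simp only [Aof, Finset.mem_image, Finset.mem_range]
      exact ⟨lam.durfee - 1 - (m : ℕ), by omega, rfl⟩
    intro m
    have h5 := congrFun (Finset.orderEmbOfFin_unique (f := (fun m : Fin (Aof lam).card =>
        lam.parts (lam.durfee - 1 - (m : ℕ)) - (lam.durfee - 1 - (m : ℕ)))) rfl hmem hmono) m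
    rw [Finset.coe_orderIsoOfFin_apply, ← h5]
  rw [desc, dif_pos (by omega)]
  rw [key]
  simp only
  have hidx : lam.durfee - 1 - ((Aof lam).card - 1 - i) = i := by omega
  rw [hidx]

lemma fw_eq_lamA (ht : 1 ≤ t) : lam = lamA (fw_valid hl ht) := by
  have hV := fw_valid hl ht
  have hcard := fw_card hl
  apply IntPartition.ext'
  intro i
  rw [lamA_parts]
  by_cases hi : i < lam.durfee
  · rw [pA_small (by omega), fw_desc hl hi]
    have := (lam.lt_durfee_iff i).mp hi
    omega
  · rw [pA_big (by omega)]
    apply nat_eq_of_lt_iff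
    intro m
    rw [cnt_mem_iff (fw_valid hl ht) i m]
    have hdur : ¬ lam.durfee < lam.parts lam.durfee := by
      rw [← IntPartition.lt_durfee_iff]; omega
    constructor
    · intro hm
      have h1 : i < lam.parts m := by
        rw [← lam.lt_conjParts_iff, hl.1 i]; exact hm
      have hmk : m < lam.durfee := by
        by_contra hmk
        have := lam.antitone lam.durfee m (by omega)
        omega
      refine ⟨by omega, ?_⟩
      rw [fw_desc hl hmk]
      have := (lam.lt_durfee_iff m).mp hmk
      omega
    · rintro ⟨hmk, hm⟩
      have hmk' : m < lam.durfee := by omega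
      rw [fw_desc hl hmk'] at hm
      have hpm := (lam.lt_durfee_iff m).mp hmk'
      have h1 : i < lam.parts m := by omega
      rw [← lam.lt_conjParts_iff, hl.1 i] at h1
      exact h1

end forward


/-- the valid sets as a finset -/
def DD (t : ℕ) : Finset (Finset ℕ) := ((Finset.Icc 1 t).powerset).filter (Valid t)

lemma mem_DD {t : ℕ} {A : Finset ℕ} : A ∈ DD t ↔ Valid t A := by
  simp only [DD, Finset.mem_filter, Finset.mem_powerset]
  exact ⟨fun h => h.2, fun h => ⟨h.1, h⟩⟩

lemma fDS_eq {t : ℕ} (ht : 1 ≤ t) : fDS t = (DD t).card := by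
  have e : {lam : IntPartition // lam.InDS t} ≃ {A : Finset ℕ // A ∈ DD t} := by
    refine ⟨fun x => ⟨Aof x.1, mem_DD.mpr (fw_valid x.2 ht)⟩,
      fun y => ⟨lamA (mem_DD.mp y.2), lamA_InDS (mem_DD.mp y.2) ht⟩, ?_, ?_⟩
    · rintro ⟨lam, hl⟩
      apply Subtype.ext
      exact (fw_eq_lamA hl ht).symm
    · rintro ⟨A, hA⟩
      apply Subtype.ext
      have hV := mem_DD.mp hA
      show Aof (lamA hV) = A
      rw [Aof, lamA_durfee hV]
      exact lamA_recover hV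
  rw [fDS, Nat.card_congr e, Nat.card_eq_fintype_card, Fintype.card_coe]

/-- the empty partition -/
def epart : IntPartition := ⟨fun _ => 0, fun _ _ _ => le_refl 0, ⟨0, fun _ _ => rfl⟩⟩

lemma epart_InDS (t : ℕ) : epart.InDS t := by
  have hconj : ∀ j, epart.conjParts j = 0 := by
    intro j
    have := nat_eq_of_lt_iff (n := epart.conjParts j) (m := 0) (fun i => by
      rw [IntPartition.lt_conjParts_iff]
      show (j < 0) ↔ _
      omega)
    omega
  refine ⟨fun j => (hconj j).trans rfl, ?_, ?_, ?_⟩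
  · intro i j hc _; exact absurd hc (by show ¬ j < 0; omega)
  · intro i j hc _; exact absurd hc (by show ¬ j < 0; omega)
  · intro i j hi _ _
    exfalso
    have := (epart.lt_durfee_iff i).mp hi
    exact absurd this (by show ¬ i < 0; omega)

lemma InDS_zero_unique {lam : IntPartition} (hl : lam.InDS 0) : lam = epart := by
  apply IntPartition.ext'
  intro i
  show lam.parts i = 0
  by_contra h
  have hc : lam.IsCell i 0 := by show 0 < lam.parts i; omega
  exact hl.2.2.1 i 0 hc (one_dvd _)

lemma fDS_zero : fDS 0 = 1 := by
  rw [fDS, Nat.card_eq_one_iff_unique]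
  constructor
  · constructor
    rintro ⟨a, ha⟩ ⟨b, hb⟩
    exact Subtype.ext ((InDS_zero_unique ha).trans (InDS_zero_unique hb).symm)
  · exact ⟨⟨epart, epart_InDS 0⟩⟩

lemma DD_card_rec (m : ℕ) :
    (DD (m+3)).card = (DD (m+2)).card + (DD m).card := by
  set t := m + 3 with hts
  have hsplit := Finset.card_filter_add_card_filter_not
    (s := DD t) (p := fun A => 1 ∈ A)
  have hb1 : ((DD t).filter (fun A => ¬ 1 ∈ A)).card = (DD (m+2)).card := by
    apply Finset.card_nbij' (i := fun A => A.image (fun a => t + 1 - a))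
      (j := fun B => B.image (fun b => t + 1 - b))
    · intro A hA
      simp only [Finset.mem_coe, Finset.mem_filter] at hA
      obtain ⟨hDD, h1⟩ := hA
      have hV := mem_DD.mp hDD
      have hmem : ∀ a ∈ A, 2 ≤ a ∧ a ≤ t := by
        intro a ha
        have := hV.1 ha
        simp only [Finset.mem_Icc] at this
        constructor
        · rcases Nat.lt_or_ge a 2 with h | h
          · interval_cases a
            · omega
            · exact absurd ha h1
          · exact h
        · omega
      rw [Finset.mem_coe, mem_DD]
      refine ⟨?_, ?_, ?_⟩
      · intro x hx
        simp only [Finset.mem_image] at hx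
        obtain ⟨a, ha, rfl⟩ := hx
        have := hmem a ha
        simp only [Finset.mem_Icc]
        omega
      · intro x hx y hy
        simp only [Finset.mem_image] at hx hy
        obtain ⟨a, ha, rfl⟩ := hx
        obtain ⟨b, hb, rfl⟩ := hy
        have h1 := hmem a ha
        have h2 := hmem b hb
        have h3 := hV.2.1 a ha b hb
        omega
      · intro x hx y hy hxy
        simp only [Finset.mem_image] at hx hy
        obtain ⟨a, ha, rfl⟩ := hx
        obtain ⟨b, hb, rfl⟩ := hy
        have h1 := hmem a ha
        have h2 := hmem b hb
        have h3 := hV.2.2 b hb a ha (by omega)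
        omega
    · intro B hB
      have hV := mem_DD.mp hB
      have hmem : ∀ b ∈ B, 1 ≤ b ∧ b ≤ m + 2 := by
        intro b hb
        have := hV.1 hb
        simp only [Finset.mem_Icc] at this
        omega
      simp only [Finset.mem_coe, Finset.mem_filter]
      constructor
      · rw [mem_DD]
        refine ⟨?_, ?_, ?_⟩
        · intro x hx
          simp only [Finset.mem_image] at hx
          obtain ⟨b, hb, rfl⟩ := hx
          have := hmem b hb
          simp only [Finset.mem_Icc]
          omega
        · intro x hx y hy
          simp only [Finset.mem_image] at hx hy
          obtain ⟨a, ha, rfl⟩ := hx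
          obtain ⟨b, hb, rfl⟩ := hy
          have h1 := hmem a ha
          have h2 := hmem b hb
          have h3 := hV.2.1 a ha b hb
          omega
        · intro x hx y hy hxy
          simp only [Finset.mem_image] at hx hy
          obtain ⟨a, ha, rfl⟩ := hx
          obtain ⟨b, hb, rfl⟩ := hy
          have h1 := hmem a ha
          have h2 := hmem b hb
          have h3 := hV.2.2 b hb a ha (by omega)
          omega
      · intro hcon
        simp only [Finset.mem_image] at hcon
        obtain ⟨b, hb, hbe⟩ := hcon
        have := hmem b hb
        omega
    · intro A hA
      simp only [Finset.mem_coe, Finset.mem_filter] at hA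
      obtain ⟨hDD, h1⟩ := hA
      have hV := mem_DD.mp hDD
      dsimp only
      rw [Finset.image_image]
      have : ∀ a ∈ A, ((fun b => t + 1 - b) ∘ (fun a => t + 1 - a)) a = id a := by
        intro a ha
        have := hV.1 ha
        simp only [Finset.mem_Icc] at this
        simp only [Function.comp_apply, id_eq]
        omega
      rw [Finset.image_congr this, Finset.image_id]
    · intro B hB
      have hV := mem_DD.mp hB
      dsimp only
      rw [Finset.image_image]
      have : ∀ b ∈ B, ((fun a => t + 1 - a) ∘ (fun b => t + 1 - b)) b = id b := by
        intro b hb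
        have := hV.1 hb
        simp only [Finset.mem_Icc] at this
        simp only [Function.comp_apply, id_eq]
        omega
      rw [Finset.image_congr this, Finset.image_id]
  have hb2 : ((DD t).filter (fun A => 1 ∈ A)).card = (DD m).card := by
    apply Finset.card_nbij' (i := fun A => (A.erase 1).image (fun a => t - a))
      (j := fun B => insert 1 (B.image (fun b => t - b)))
    · intro A hA
      simp only [Finset.mem_coe, Finset.mem_filter] at hA
      obtain ⟨hDD, h1⟩ := hA
      have hV := mem_DD.mp hDD
      have hmem : ∀ a ∈ A.erase 1, 3 ≤ a ∧ a ≤ t - 1 := by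
        intro a ha
        rw [Finset.mem_erase] at ha
        obtain ⟨hne, ha⟩ := ha
        have hic := hV.1 ha
        simp only [Finset.mem_Icc] at hic
        have hg : 1 + 2 ≤ a := hV.2.2 1 h1 a ha (by omega)
        have hs := (hV.2.1 a ha 1 h1).1
        omega
      rw [Finset.mem_coe, mem_DD]
      refine ⟨?_, ?_, ?_⟩
      · intro x hx
        simp only [Finset.mem_image] at hx
        obtain ⟨a, ha, rfl⟩ := hx
        have := hmem a ha
        simp only [Finset.mem_Icc]
        omega
      · intro x hx y hy
        simp only [Finset.mem_image] at hx hy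
        obtain ⟨a, ha, rfl⟩ := hx
        obtain ⟨b, hb, rfl⟩ := hy
        have h2 := hmem a ha
        have h3 := hmem b hb
        have h4 := hV.2.1 a (Finset.mem_of_mem_erase ha) b (Finset.mem_of_mem_erase hb)
        omega
      · intro x hx y hy hxy
        simp only [Finset.mem_image] at hx hy
        obtain ⟨a, ha, rfl⟩ := hx
        obtain ⟨b, hb, rfl⟩ := hy
        have h2 := hmem a ha
        have h3 := hmem b hb
        have h4 := hV.2.2 b (Finset.mem_of_mem_erase hb) a (Finset.mem_of_mem_erase ha) (by omega)
        omega
    · intro B hB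
      have hV := mem_DD.mp hB
      have hmem : ∀ b ∈ B, 1 ≤ b ∧ b ≤ m := by
        intro b hb
        have := hV.1 hb
        simp only [Finset.mem_Icc] at this
        omega
      have himg : ∀ x ∈ B.image (fun b => t - b), 3 ≤ x ∧ x ≤ t - 1 := by
        intro x hx
        simp only [Finset.mem_image] at hx
        obtain ⟨b, hb, rfl⟩ := hx
        have := hmem b hb
        omega
      simp only [Finset.mem_coe, Finset.mem_filter]
      constructor
      · rw [mem_DD]
        refine ⟨?_, ?_, ?_⟩
        · intro x hx
          rw [Finset.mem_insert] at hx
          simp only [Finset.mem_Icc]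
          rcases hx with rfl | hx
          · omega
          · have := himg x hx
            omega
        · intro x hx y hy
          rw [Finset.mem_insert] at hx hy
          rcases hx with rfl | hx <;> rcases hy with rfl | hy
          · omega
          · have := himg y hy; omega
          · have := himg x hx; omega
          · simp only [Finset.mem_image] at hx hy
            obtain ⟨a, ha, rfl⟩ := hx
            obtain ⟨b, hb, rfl⟩ := hy
            have h2 := hmem a ha
            have h3 := hmem b hb
            have h4 := hV.2.1 a ha b hb
            omega
        · intro x hx y hy hxy
          rw [Finset.mem_insert] at hx hy
          rcases hx with rfl | hx <;> rcases hy with rfl | hy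
          · omega
          · have := himg y hy; omega
          · have := himg x hx; omega
          · simp only [Finset.mem_image] at hx hy
            obtain ⟨a, ha, rfl⟩ := hx
            obtain ⟨b, hb, rfl⟩ := hy
            have h2 := hmem a ha
            have h3 := hmem b hb
            have h4 := hV.2.2 b hb a ha (by omega)
            omega
      · exact Finset.mem_insert_self 1 _
    · intro A hA
      simp only [Finset.mem_coe, Finset.mem_filter] at hA
      obtain ⟨hDD, h1⟩ := hA
      have hV := mem_DD.mp hDD
      have hmem : ∀ a ∈ A.erase 1, 3 ≤ a ∧ a ≤ t - 1 := by
        intro a ha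
        rw [Finset.mem_erase] at ha
        obtain ⟨hne, ha⟩ := ha
        have hic := hV.1 ha
        simp only [Finset.mem_Icc] at hic
        have hg : 1 + 2 ≤ a := hV.2.2 1 h1 a ha (by omega)
        have hs := (hV.2.1 a ha 1 h1).1
        omega
      dsimp only
      rw [Finset.image_image]
      have he : ∀ a ∈ A.erase 1, ((fun b => t - b) ∘ (fun a => t - a)) a = id a := by
        intro a ha
        have := hmem a ha
        simp only [Function.comp_apply, id_eq]
        omega
      rw [Finset.image_congr he, Finset.image_id, Finset.insert_erase h1]
    · intro B hB
      have hV := mem_DD.mp hB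
      have hmem : ∀ b ∈ B, 1 ≤ b ∧ b ≤ m := by
        intro b hb
        have := hV.1 hb
        simp only [Finset.mem_Icc] at this
        omega
      have h1notin : 1 ∉ B.image (fun b => t - b) := by
        intro hcon
        simp only [Finset.mem_image] at hcon
        obtain ⟨b, hb, hbe⟩ := hcon
        have := hmem b hb
        omega
      dsimp only
      rw [Finset.erase_insert h1notin, Finset.image_image]
      have he : ∀ b ∈ B, ((fun a => t - a) ∘ (fun b => t - b)) b = id b := by
        intro b hb
        have := hmem b hb
        simp only [Function.comp_apply, id_eq]
        omega
      rw [Finset.image_congr he, Finset.image_id]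
  omega

lemma fDS_rec (m : ℕ) : fDS (m + 3) = fDS (m + 2) + fDS m := by
  rcases Nat.eq_zero_or_pos m with rfl | hm
  · have hr := DD_card_rec 0
    have h0 : (DD 0).card = 1 := by decide
    rw [fDS_zero, fDS_eq (show 1 ≤ 0 + 3 by omega), fDS_eq (show 1 ≤ 0 + 2 by omega)]
    omega
  · rw [fDS_eq (by omega), fDS_eq (by omega), fDS_eq (by omega), DD_card_rec m]

lemma fDS_one : fDS 1 = 1 := by
  rw [fDS_eq (le_refl 1)]
  decide

lemma fDS_two : fDS 2 = 2 := by
  rw [fDS_eq (by omega)]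
  decide


/-- Generating function: `∑_{t ≥ 0} f(t-1) x^t = 1 / (1 - x - x^3)`, where
`f(-1) = 1`. -/
theorem fDS_generating_function :
    (PowerSeries.mk fun t : ℕ => if t = 0 then (1 : ℚ) else (fDS (t - 1) : ℚ)) *
        (1 - PowerSeries.X - PowerSeries.X ^ 3) = 1 := by
  set g : ℕ → ℚ := fun t : ℕ => if t = 0 then (1 : ℚ) else (fDS (t - 1) : ℚ) with hg
  ext n
  have expand : (PowerSeries.mk g) * (1 - PowerSeries.X - PowerSeries.X ^ 3) =
      (PowerSeries.mk g) - (PowerSeries.mk g) * PowerSeries.X ^ 1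
        - (PowerSeries.mk g) * PowerSeries.X ^ 3 := by ring
  rw [expand, map_sub, map_sub]
  simp only [PowerSeries.coeff_mul_X_pow', PowerSeries.coeff_mk, PowerSeries.coeff_one]
  match n with
  | 0 => norm_num [hg]
  | 1 => norm_num [hg, fDS_zero]
  | 2 => norm_num [hg, fDS_zero, fDS_one]
  | 3 => norm_num [hg, fDS_one, fDS_two]
  | (k+4) =>
    have e3 : k + 4 - 1 = k + 3 := by omega
    have e4 : k + 4 - 3 = k + 1 := by omega
    rw [if_pos (show (1:ℕ) ≤ k + 4 by omega), if_pos (show (3:ℕ) ≤ k + 4 by omega), e3, e4]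
    simp only [hg]
    rw [if_neg (show ¬ (k+4 = 0) by omega),
      show k + 4 - 1 = k + 3 from by omega, show k + 3 - 1 = k + 2 from by omega,
      show k + 1 - 1 = k from by omega]
    rw [fDS_rec k]
    push_cast
    ring
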